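/- Let p₁ and p₂ be nonzero polynomials in ℕ[x₁,…,xₘ] (multivariable polynomials with natural number coefficients). If τ(p₁) ∩ τ(p₂) = ∅, then τ(p₁ · p₂) = τ(p₁) ∪ τ(p₂). -/

import Mathlib

/-- `tau k` is the set of positions of 1-bits in the binary expansion of `k`. -/
def tau (k : ℕ) : Set ℕ := {t | Nat.testBit k t = true}

/-- `tauMv p` is the union of `tau d` over all exponents `d` of all variables occurring
in the monomials of the support of `p`. -/
def tauMv {m : ℕ} (p : MvPolynomial (Fin m) ℕ) : Set ℕ :=
  ⋃ d ∈ p.support, ⋃ i : Fin m, tau (d i)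

private lemma add_eq_lor : ∀ a b : ℕ, a &&& b = 0 → a + b = a ||| b := by
  intro a
  induction a using Nat.binaryRec with
  | zero => simp
  | bit b n ih =>
    intro c h
    induction c using Nat.binaryRec with
    | zero => simp
    | bit b' n' _ =>
      rw [Nat.land_bit] at h
      obtain ⟨h1, h2⟩ := Nat.bit_eq_zero_iff.mp h
      have hn := ih n' h1
      rw [Nat.lor_bit, Nat.bit_val, Nat.bit_val, Nat.bit_val]
      cases b <;> cases b' <;>
        first
          | (simp only [Bool.toNat_true, Bool.toNat_false, Bool.or_true, Bool.true_or,
              Bool.or_false, Bool.false_or]; omega)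
          | (exfalso; simp at h2)

private lemma testBit_add_of_disjoint {a b : ℕ}
    (h : ∀ t, ¬(Nat.testBit a t = true ∧ Nat.testBit b t = true)) (t : ℕ) :
    Nat.testBit (a + b) t = (Nat.testBit a t || Nat.testBit b t) := by
  have hab : a &&& b = 0 := by
    apply Nat.eq_of_testBit_eq
    intro i
    rw [Nat.testBit_land, Nat.zero_testBit]
    have := h i
    by_cases h1 : Nat.testBit a i <;> by_cases h2 : Nat.testBit b i <;> simp_all
  rw [add_eq_lor a b hab, Nat.testBit_lor]

private lemma mem_support_mul {m : ℕ} (p₁ p₂ : MvPolynomial (Fin m) ℕ)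
    {d₁ d₂ : Fin m →₀ ℕ} (h₁ : d₁ ∈ p₁.support) (h₂ : d₂ ∈ p₂.support) :
    d₁ + d₂ ∈ (p₁ * p₂).support := by
  rw [MvPolynomial.mem_support_iff] at *
  rw [MvPolynomial.coeff_mul]
  have hmem : (d₁, d₂) ∈ Finset.HasAntidiagonal.antidiagonal (d₁ + d₂) := by
    rw [Finset.HasAntidiagonal.mem_antidiagonal]
  have hpos : 0 < p₁.coeff d₁ * p₂.coeff d₂ := Nat.pos_of_ne_zero (by
    exact mul_ne_zero h₁ h₂)
  have := Finset.single_le_sum (f := fun x : (Fin m →₀ ℕ) × (Fin m →₀ ℕ) =>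
    p₁.coeff x.1 * p₂.coeff x.2) (fun i _ => Nat.zero_le _) hmem
  exact (hpos.trans_le this).ne'

theorem tauMv_mul_of_disjoint {m : ℕ} (p₁ p₂ : MvPolynomial (Fin m) ℕ)
    (h₁ : p₁ ≠ 0) (h₂ : p₂ ≠ 0)
    (h : tauMv p₁ ∩ tauMv p₂ = ∅) :
    tauMv (p₁ * p₂) = tauMv p₁ ∪ tauMv p₂ := by
  have hdisj : ∀ t, ¬(t ∈ tauMv p₁ ∧ t ∈ tauMv p₂) := by
    intro t ht
    have : t ∈ tauMv p₁ ∩ tauMv p₂ := ht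
    rw [h] at this
    exact this
  have hmem : ∀ (p : MvPolynomial (Fin m) ℕ) (t : ℕ),
      t ∈ tauMv p ↔ ∃ d ∈ p.support, ∃ i : Fin m, Nat.testBit (d i) t = true := by
    intro p t
    simp [tauMv, tau]
  have hbit : ∀ d₁ ∈ p₁.support, ∀ d₂ ∈ p₂.support, ∀ (i : Fin m) (t : ℕ),
      Nat.testBit (d₁ i + d₂ i) t = (Nat.testBit (d₁ i) t || Nat.testBit (d₂ i) t) := by
    intro d₁ hd₁ d₂ hd₂ i t
    apply testBit_add_of_disjoint
    intro s hs
    exact hdisj s ⟨(hmem p₁ s).mpr ⟨d₁, hd₁, i, hs.1⟩, (hmem p₂ s).mpr ⟨d₂, hd₂, i, hs.2⟩⟩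
  ext t
  constructor
  · rintro ht
    obtain ⟨d, hd, i, hdi⟩ := (hmem _ t).mp ht
    have hsub := MvPolynomial.support_mul p₁ p₂ hd
    rw [Finset.mem_add] at hsub
    obtain ⟨d₁, hd₁, d₂, hd₂, rfl⟩ := hsub
    have : ((d₁ + d₂) i) = d₁ i + d₂ i := rfl
    rw [this, hbit d₁ hd₁ d₂ hd₂ i t, Bool.or_eq_true] at hdi
    rcases hdi with hdi | hdi
    · exact Or.inl ((hmem p₁ t).mpr ⟨d₁, hd₁, i, hdi⟩)
    · exact Or.inr ((hmem p₂ t).mpr ⟨d₂, hd₂, i, hdi⟩)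
  · rintro (ht | ht)
    · obtain ⟨d₁, hd₁, i, hdi⟩ := (hmem p₁ t).mp ht
      obtain ⟨d₂, hd₂⟩ := (MvPolynomial.support_nonempty.mpr h₂)
      refine (hmem _ t).mpr ⟨d₁ + d₂, mem_support_mul p₁ p₂ hd₁ hd₂, i, ?_⟩
      show Nat.testBit (d₁ i + d₂ i) t = true
      rw [hbit d₁ hd₁ d₂ hd₂ i t, hdi, Bool.true_or]
    · obtain ⟨d₂, hd₂, i, hdi⟩ := (hmem p₂ t).mp ht
      obtain ⟨d₁, hd₁⟩ := (MvPolynomial.support_nonempty.mpr h₁)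
      refine (hmem _ t).mpr ⟨d₁ + d₂, mem_support_mul p₁ p₂ hd₁ hd₂, i, ?_⟩
      show Nat.testBit (d₁ i + d₂ i) t = true
      rw [hbit d₁ hd₁ d₂ hd₂ i t, hdi, Bool.or_true]
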